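/- The group with presentation ⟨d, a, c | d³ = a² = c² = (ac)² = 1, ad = da, d = cd²c⟩ is isomorphic to (ℤ/3 ⋊ ℤ/2) × ℤ/2, i.e. to S₃ × ℤ/2. -/

import Mathlib

/-- Generators: `0 = d`, `1 = a`, `2 = c`. -/
def relsHM : Set (FreeGroup (Fin 3)) :=
  { (FreeGroup.of 0) ^ 3,
    (FreeGroup.of 1) ^ 2,
    (FreeGroup.of 2) ^ 2,
    (FreeGroup.of 1 * FreeGroup.of 2) ^ 2,
    FreeGroup.of 1 * FreeGroup.of 0 * (FreeGroup.of 1)⁻¹ * (FreeGroup.of 0)⁻¹,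
    (FreeGroup.of 0)⁻¹ * (FreeGroup.of 2 * (FreeGroup.of 0) ^ 2 * FreeGroup.of 2) }

namespace HMaux

abbrev G := PresentedGroup relsHM

def D : G := PresentedGroup.of 0
def A : G := PresentedGroup.of 1
def C : G := PresentedGroup.of 2

lemma rel_eq_one {r : FreeGroup (Fin 3)} (h : r ∈ relsHM) : PresentedGroup.mk relsHM r = 1 :=
  (QuotientGroup.eq_one_iff _).2 (Subgroup.subset_normalClosure h)

lemma hD3 : D ^ 3 = 1 := by
  have := rel_eq_one (r := (FreeGroup.of 0) ^ 3) (by left; rfl)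
  simpa [D, PresentedGroup.of] using this

lemma hA2 : A ^ 2 = 1 := by
  have := rel_eq_one (r := (FreeGroup.of 1) ^ 2) (by right; left; rfl)
  simpa [A, PresentedGroup.of] using this

lemma hC2 : C ^ 2 = 1 := by
  have := rel_eq_one (r := (FreeGroup.of 2) ^ 2) (by right; right; left; rfl)
  simpa [C, PresentedGroup.of] using this

lemma hAC2 : (A * C) ^ 2 = 1 := by
  have := rel_eq_one (r := (FreeGroup.of 1 * FreeGroup.of 2) ^ 2) (by right; right; right; left; rfl)
  simpa [A, C, PresentedGroup.of] using this

lemma commAD : Commute A D := by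
  have h := rel_eq_one
    (r := FreeGroup.of 1 * FreeGroup.of 0 * (FreeGroup.of 1)⁻¹ * (FreeGroup.of 0)⁻¹)
    (by right; right; right; right; left; rfl)
  simp only [map_mul, map_inv] at h
  have h1 : A * D * A⁻¹ * D⁻¹ = 1 := h
  have h2 : A * D * A⁻¹ = D := by
    have := congrArg (· * D) h1
    simpa [mul_assoc] using this
  show A * D = D * A
  conv_rhs => rw [← h2]
  rw [inv_mul_cancel_right]

lemma hCDC : C * D ^ 2 * C = D := by
  have h := rel_eq_one
    (r := (FreeGroup.of 0)⁻¹ * (FreeGroup.of 2 * (FreeGroup.of 0) ^ 2 * FreeGroup.of 2))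
    (by right; right; right; right; right; rfl)
  simp only [map_mul, map_inv, map_pow] at h
  have h1 : D⁻¹ * (C * D ^ 2 * C) = 1 := h
  have := congrArg (D * ·) h1
  simpa [← mul_assoc] using this

lemma hCinv : C⁻¹ = C := by
  have := hC2
  rw [pow_two] at this
  exact inv_eq_of_mul_eq_one_right this

lemma hAinv : A⁻¹ = A := by
  have := hA2
  rw [pow_two] at this
  exact inv_eq_of_mul_eq_one_right this

lemma hCC : C * C = 1 := by rw [← pow_two]; exact hC2

lemma hC2z : C ^ (2 : ℤ) = 1 := by
  have := zpow_natCast C 2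
  exact this.trans hC2

lemma hD2 : D ^ 2 = D⁻¹ := by
  have : D⁻¹ * D ^ 3 = D⁻¹ * 1 := by rw [hD3]
  calc D ^ 2 = D⁻¹ * D ^ 3 := by group
  _ = D⁻¹ := by rw [hD3, mul_one]

lemma commAC : Commute A C := by
  have h : A * C * (A * C) = 1 := by have := hAC2; rwa [pow_two] at this
  show A * C = C * A
  have h2 : A * C = (A * C)⁻¹ := (inv_eq_of_mul_eq_one_right h).symm
  rw [h2, mul_inv_rev, hAinv, hCinv]

lemma hCDCinv : C * D * C = D⁻¹ := by
  have h : C * D⁻¹ * C = D := by rw [← hD2]; exact hCDC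
  have := congrArg (fun x => x⁻¹) h
  simpa [mul_inv_rev, hCinv, mul_assoc] using this

lemma conjCD (p : ℤ) : C * D ^ p * C = D ^ (-p) := by
  have h : (MulAut.conj C) D = D⁻¹ := by
    simpa [MulAut.conj_apply, hCinv, mul_assoc] using hCDCinv
  have h2 : (MulAut.conj C) (D ^ p) = (D⁻¹) ^ p := by rw [map_zpow, h]
  have h3 : C * D ^ p * C⁻¹ = (D⁻¹) ^ p := h2
  rw [hCinv] at h3
  rw [h3, inv_zpow, zpow_neg]

/-- Swap `C ^ k` past `D ^ p`. -/
lemma swapCD (k p : ℤ) : C ^ k * D ^ p = D ^ (if Even k then p else -p) * C ^ k := by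
  rcases Int.even_or_odd k with he | ho
  · have hCk : C ^ k = 1 := by
      obtain ⟨m, hm⟩ := he
      rw [hm]
      calc C ^ (m + m) = (C ^ 2) ^ m := by rw [← zpow_natCast, ← zpow_mul]; ring_nf
      _ = 1 := by rw [hC2, one_zpow]
    simp [hCk, if_pos he]
  · have hCk : C ^ k = C := by
      obtain ⟨m, hm⟩ := ho
      rw [hm]
      rw [zpow_add, zpow_one, zpow_mul, hC2z, one_zpow, one_mul]
    have hne : ¬ Even k := by
      rintro ⟨m', hm'⟩
      obtain ⟨m2, hm2⟩ := ho
      omega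
    rw [hCk, if_neg hne]
    rw [← conjCD p, mul_assoc (C * D ^ p) C C, hCC, mul_one]

lemma normal_form (x : G) : ∃ i j k : ℤ, x = D ^ i * A ^ j * C ^ k := by
  have hx : x ∈ Subgroup.closure (Set.range (PresentedGroup.of : Fin 3 → G)) := by
    rw [PresentedGroup.closure_range_of]; trivial
  induction hx using Subgroup.closure_induction with
  | mem g hg =>
      obtain ⟨n, rfl⟩ := hg
      fin_cases n
      · exact ⟨1, 0, 0, by simp [D]⟩
      · exact ⟨0, 1, 0, by simp [A]⟩
      · exact ⟨0, 0, 1, by simp [C]⟩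
  | one => exact ⟨0, 0, 0, by simp⟩
  | mul x y _ _ hx hy =>
      obtain ⟨i, j, k, rfl⟩ := hx
      obtain ⟨p, q, r, rfl⟩ := hy
      refine ⟨i + (if Even k then p else -p), j + q, k + r, ?_⟩
      have hAD : Commute (A ^ j) (D ^ (if Even k then p else -p)) := (commAD.zpow_zpow _ _)
      have hCA : Commute (C ^ k) (A ^ q) := ((commAC.symm).zpow_zpow _ _)
      calc D ^ i * A ^ j * C ^ k * (D ^ p * A ^ q * C ^ r)
          = D ^ i * A ^ j * (C ^ k * D ^ p) * A ^ q * C ^ r := by group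
        _ = D ^ i * A ^ j * (D ^ (if Even k then p else -p) * C ^ k) * A ^ q * C ^ r := by
              rw [swapCD]
        _ = D ^ i * (A ^ j * D ^ (if Even k then p else -p)) * (C ^ k * A ^ q) * C ^ r := by
              group
        _ = D ^ i * (D ^ (if Even k then p else -p) * A ^ j) * (A ^ q * C ^ k) * C ^ r := by
              rw [hAD.eq, hCA.eq]
        _ = D ^ (i + (if Even k then p else -p)) * A ^ (j + q) * C ^ (k + r) := by
              rw [zpow_add, zpow_add, zpow_add]; group
  | inv x _ hx =>
      obtain ⟨i, j, k, rfl⟩ := hx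
      refine ⟨(if Even k then -i else i), -j, -k, ?_⟩
      have h1 : (D ^ i * A ^ j * C ^ k)⁻¹ = C ^ (-k) * A ^ (-j) * D ^ (-i) := by
        rw [zpow_neg, zpow_neg, zpow_neg]; group
      rw [h1]
      have hCA : Commute (C ^ (-k)) (A ^ (-j)) := ((commAC.symm).zpow_zpow _ _)
      have hAD : Commute (A ^ (-j)) (D ^ (if Even k then -i else i)) := (commAD.zpow_zpow _ _)
      have hsw : C ^ (-k) * D ^ (-i) = D ^ (if Even k then -i else i) * C ^ (-k) := by
        have := swapCD (-k) (-i)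
        have hpar : (if Even (-k) then (-i) else -(-i)) = (if Even k then -i else i) := by
          simp [even_neg]
        rwa [hpar] at this
      calc C ^ (-k) * A ^ (-j) * D ^ (-i)
          = C ^ (-k) * D ^ (-i) * A ^ (-j) := by
            rw [mul_assoc, (commAD.zpow_zpow (-j) (-i)).eq, ← mul_assoc]
        _ = D ^ (if Even k then -i else i) * C ^ (-k) * A ^ (-j) := by rw [hsw]
        _ = D ^ (if Even k then -i else i) * A ^ (-j) * C ^ (-k) := by
            rw [mul_assoc, mul_assoc, hCA.eq]

lemma zpow_reduce (g : G) (n : ℕ) [NeZero n] (h : g ^ n = 1) (i : ℤ) :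
    g ^ i = g ^ ((i : ZMod n).val) := by
  have hcast : (((((i : ZMod n).val : ℤ)) - i : ℤ) : ZMod n) = 0 := by
    push_cast
    simp [ZMod.natCast_val, ZMod.cast_id]
  have hdvd : (n : ℤ) ∣ (((i : ZMod n).val : ℤ) - i) :=
    (ZMod.intCast_zmod_eq_zero_iff_dvd _ n).1 hcast
  obtain ⟨t, ht⟩ := hdvd
  have hi : i = ((i : ZMod n).val : ℤ) + n * (-t) := by
    rw [mul_neg, ← ht]; ring
  calc g ^ i = g ^ (((i : ZMod n).val : ℤ)) * (g ^ (n : ℤ)) ^ (-t) := by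
        rw [← zpow_mul, ← zpow_add, ← hi]
    _ = g ^ ((i : ZMod n).val) := by
        rw [zpow_natCast, zpow_natCast, h, one_zpow, mul_one]

def ψ : ZMod 3 × ZMod 2 × ZMod 2 → G :=
  fun x => D ^ x.1.val * A ^ x.2.1.val * C ^ x.2.2.val

lemma ψ_surj : Function.Surjective ψ := by
  intro x
  obtain ⟨i, j, k, rfl⟩ := normal_form x
  refine ⟨((i : ZMod 3), (j : ZMod 2), (k : ZMod 2)), ?_⟩
  simp only [ψ]
  rw [← zpow_reduce D 3 hD3 i, ← zpow_reduce A 2 hA2 j, ← zpow_reduce C 2 hC2 k]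

instance : Finite G := Finite.of_surjective ψ ψ_surj

abbrev tgt := Equiv.Perm (Fin 3) × Multiplicative (ZMod 2)

def σ : Equiv.Perm (Fin 3) := finRotate 3
def τ : Equiv.Perm (Fin 3) := Equiv.swap 0 1
def u : Multiplicative (ZMod 2) := Multiplicative.ofAdd 1

def Fgen : Fin 3 → tgt := ![(σ, 1), (1, u), (τ, 1)]

lemma hrels : ∀ r ∈ relsHM, FreeGroup.lift Fgen r = 1 := by
  intro r hr
  rcases hr with h | h | h | h | h | h <;> subst h <;>
    simp only [map_mul, map_inv, map_pow, FreeGroup.lift_apply_of, Fgen, Matrix.cons_val_zero,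
      Matrix.cons_val_one, Matrix.head_cons, Matrix.cons_val_two, Matrix.tail_cons] <;>
    decide

def f : G →* tgt := PresentedGroup.toGroup hrels

lemma f_D : f D = (σ, 1) := by
  simp [f, D, PresentedGroup.toGroup.of, Fgen]

lemma f_A : f A = (1, u) := by
  simp [f, A, PresentedGroup.toGroup.of, Fgen]

lemma f_C : f C = (τ, 1) := by
  simp [f, C, PresentedGroup.toGroup.of, Fgen]

lemma f_surj : Function.Surjective f := by
  have hgen : ∀ y : tgt, ∃ i : Fin 3, ∃ j : Fin 2, ∃ k : Fin 2,
      y = ((σ, 1) : tgt) ^ (i : ℕ) * ((1, u) : tgt) ^ (j : ℕ) * ((τ, 1) : tgt) ^ (k : ℕ) := by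
    decide
  intro y
  obtain ⟨i, j, k, hy⟩ := hgen y
  refine ⟨D ^ (i : ℕ) * A ^ (j : ℕ) * C ^ (k : ℕ), ?_⟩
  rw [map_mul, map_mul, map_pow, map_pow, map_pow, f_D, f_A, f_C, ← hy]

lemma card_tgt : Nat.card tgt = 12 := by
  simp [Nat.card_eq_fintype_card, Fintype.card_perm]
  rfl

lemma card_G_le : Nat.card G ≤ 12 := by
  have := Nat.card_le_card_of_surjective ψ ψ_surj
  simpa [Nat.card_eq_fintype_card] using this

lemma card_le_G : 12 ≤ Nat.card G := by
  have := Nat.card_le_card_of_surjective f f_surj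
  rwa [card_tgt] at this

end HMaux

/-- The group `⟨d,a,c | d³ = a² = c² = (ac)² = 1, ad = da, d = cd²c⟩` is isomorphic to
`S₃ × ℤ/2`. -/
theorem stmt1 :
    Nonempty (PresentedGroup relsHM ≃* Equiv.Perm (Fin 3) × Multiplicative (ZMod 2)) := by
  have hbij : Function.Bijective HMaux.f :=
    (Nat.bijective_iff_surjective_and_card HMaux.f).2
      ⟨HMaux.f_surj, by
        have h1 := HMaux.card_G_le
        have h2 := HMaux.card_le_G
        rw [HMaux.card_tgt]
        omega⟩
  exact ⟨MulEquiv.ofBijective HMaux.f hbij⟩
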